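/- arXiv:2203.09190 — 10 statements merged into one kernel-verified Lean document; each statement's English description precedes it below -/
import Mathlib

section
/- Under the radial network encoding, the matrix 1 − G is invertible, and its inverse H := (1 − G)⁻¹ satisfies, for all k l : Fin n, H k l = 1 if bus k lies on the path from the slack bus to bus l or k = l (precisely, if Relation.ReflTransGen (fun a b => up a = some b) l k holds), and H k l = 0 otherwise. -/
open Matrix
open scoped Classical

private lemma rtg_le {n : ℕ} (up : Fin n → Option (Fin n))
    (hup : ∀ l k, up l = some k → (k : ℕ) < (l : ℕ)) {a b : Fin n}
    (h : Relation.ReflTransGen (fun a b => up a = some b) a b) : (b : ℕ) ≤ (a : ℕ) := by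
  induction h with
  | refl => exact le_rfl
  | tail h1 h2 ih => exact le_trans (le_of_lt (hup _ _ h2)) ih

private lemma rtg_chain {n : ℕ} (up : Fin n → Option (Fin n)) {l a b : Fin n}
    (ha : Relation.ReflTransGen (fun a b => up a = some b) l a)
    (hb : Relation.ReflTransGen (fun a b => up a = some b) l b) :
    Relation.ReflTransGen (fun a b => up a = some b) a b ∨
    Relation.ReflTransGen (fun a b => up a = some b) b a := by
  induction ha with
  | refl => exact Or.inl hb
  | tail hc hR ih =>
    rcases ih with h | h
    · rcases Relation.ReflTransGen.cases_head h with rfl | ⟨d, hd, hdb⟩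
      · exact Or.inr (Relation.ReflTransGen.single hR)
      · have : d = _ := Option.some.inj (hd.symm.trans hR)
        subst this
        exact Or.inl hdb
    · exact Or.inr (h.tail hR)

private lemma rtg_unique {n : ℕ} (up : Fin n → Option (Fin n))
    (hup : ∀ l k, up l = some k → (k : ℕ) < (l : ℕ)) {l k j1 j2 : Fin n}
    (h1 : Relation.ReflTransGen (fun a b => up a = some b) l j1) (hk1 : up j1 = some k)
    (h2 : Relation.ReflTransGen (fun a b => up a = some b) l j2) (hk2 : up j2 = some k) :
    j1 = j2 := by
  rcases rtg_chain up h1 h2 with h | h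
  · rcases Relation.ReflTransGen.cases_head h with rfl | ⟨d, hd, hdb⟩
    · rfl
    · have hdk : d = k := Option.some.inj (hd.symm.trans hk1)
      subst hdk
      have := rtg_le up hup hdb
      have := hup _ _ hk2
      omega
  · rcases Relation.ReflTransGen.cases_head h with rfl | ⟨d, hd, hdb⟩
    · rfl
    · have hdk : d = k := Option.some.inj (hd.symm.trans hk2)
      subst hdk
      have := rtg_le up hup hdb
      have := hup _ _ hk1
      omega

/-- Under the radial network encoding, `1 - G` is invertible and its inverse
`H := (1 - G)⁻¹` has entry `1` at `(k, l)` exactly when bus `k` lies on the path from the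
slack bus to bus `l` or `k = l`, and `0` otherwise. -/
theorem stmt0 (n : ℕ) (up : Fin n → Option (Fin n))
    (hup : ∀ l k, up l = some k → (k : ℕ) < (l : ℕ)) :
    IsUnit (1 - Matrix.of (fun k l : Fin n => if up l = some k then (1 : ℝ) else 0)) ∧
    ∀ k l : Fin n,
      (1 - Matrix.of (fun k l : Fin n => if up l = some k then (1 : ℝ) else 0))⁻¹ k l =
        if Relation.ReflTransGen (fun a b => up a = some b) l k then 1 else 0 := by
  set R : Fin n → Fin n → Prop := fun a b => up a = some b with hR
  set G : Matrix (Fin n) (Fin n) ℝ :=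
    Matrix.of (fun k l : Fin n => if up l = some k then (1 : ℝ) else 0) with hG
  set H : Matrix (Fin n) (Fin n) ℝ :=
    Matrix.of (fun k l : Fin n => if Relation.ReflTransGen R l k then (1 : ℝ) else 0) with hH
  have key : (1 - G) * H = 1 := by
    ext k l
    have hsum : ∀ j : Fin n, G k j * H j l =
        if up j = some k ∧ Relation.ReflTransGen R l j then (1 : ℝ) else 0 := by
      intro j
      simp only [hG, hH, Matrix.of_apply]
      split_ifs with h1 h2 h3 h3 <;> simp_all
    rw [Matrix.sub_mul, Matrix.one_mul, Matrix.sub_apply, Matrix.mul_apply]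
    simp only [hsum]
    by_cases hkl : k = l
    · subst hkl
      have : ∀ j ∈ Finset.univ, (if up j = some k ∧ Relation.ReflTransGen R k j
          then (1 : ℝ) else 0) = 0 := by
        intro j _
        rw [if_neg]
        rintro ⟨h1, h2⟩
        have := rtg_le up hup h2
        have := hup _ _ h1
        omega
      rw [Finset.sum_eq_zero this]
      simp only [hH, Matrix.of_apply, Matrix.one_apply_eq, sub_zero,
        if_pos (Relation.ReflTransGen.refl)]
    · by_cases hrt : Relation.ReflTransGen R l k
      · rcases Relation.ReflTransGen.cases_tail hrt with rfl | ⟨j0, hj0, hRj0⟩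
        · exact absurd rfl hkl
        · have : (∑ j : Fin n, if up j = some k ∧ Relation.ReflTransGen R l j
              then (1 : ℝ) else 0) = 1 := by
            rw [Finset.sum_eq_single j0]
            · rw [if_pos ⟨hRj0, hj0⟩]
            · intro j _ hne
              rw [if_neg]
              rintro ⟨h1, h2⟩
              exact hne (rtg_unique up hup h2 h1 hj0 hRj0)
            · intro h; exact absurd (Finset.mem_univ j0) h
          rw [this]
          simp [hH, Matrix.one_apply, hrt, hkl]
      · have : ∀ j ∈ Finset.univ, (if up j = some k ∧ Relation.ReflTransGen R l j
            then (1 : ℝ) else 0) = 0 := by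
          intro j _
          rw [if_neg]
          rintro ⟨h1, h2⟩
          exact hrt (h2.tail h1)
        rw [Finset.sum_eq_zero this]
        simp [hH, Matrix.one_apply, hrt, hkl]
  have hunit : IsUnit (1 - G) := @isUnit_of_invertible _ _ _ (invertibleOfRightInverse _ _ key)
  have hinv : (1 - G)⁻¹ = H := Matrix.inv_eq_right_inv key
  exact ⟨hunit, fun k l => by rw [hinv]; rfl⟩
end

section
/- Let n : ℕ, let G : Matrix (Fin n) (Fin n) ℝ with 1 − G invertible and H := (1 − G)⁻¹, let r, x, g, b, p, q, f, e : Fin n → ℝ and v₀ : ℝ. Set M₁ := 2·diag(r)·H·diag(g), M₂ := 2·diag(x)·H·diag(b), A := 1 − Gᵀ + M₁ + M₂, and assume A is invertible with C := A⁻¹; set D := 2·C·diag(r)·(H − 1)·diag(r) + 2·C·diag(x)·(H − 1)·diag(x) + C·diag(fun l => (r l)^2 + (x l)^2). If v, v̂ : Fin n → ℝ satisfy A.mulVec v = v₀ • e − 2·diag(r)·H.mulVec p − 2·diag(x)·H.mulVec q + (−2·diag(r)·H·diag(r) − 2·diag(x)·H·diag(x) + diag(fun l => (r l)^2 + (x l)^2)).mulVec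 f and A.mulVec v̂ = v₀ • e − 2·diag(r)·H.mulVec p − 2·diag(x)·H.mulVec q, then v = v̂ − D.mulVec f (equation (19) of the paper). -/
open Matrix

noncomputable section

def Hmat {n : ℕ} (G : Matrix (Fin n) (Fin n) ℝ) : Matrix (Fin n) (Fin n) ℝ := (1 - G)⁻¹

def Amat {n : ℕ} (G : Matrix (Fin n) (Fin n) ℝ) (r x g b : Fin n → ℝ) :
    Matrix (Fin n) (Fin n) ℝ :=
  1 - Gᵀ + (2 : ℝ) • (diagonal r * Hmat G * diagonal g)
    + (2 : ℝ) • (diagonal x * Hmat G * diagonal b)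

def Dmat {n : ℕ} (G : Matrix (Fin n) (Fin n) ℝ) (r x g b : Fin n → ℝ) :
    Matrix (Fin n) (Fin n) ℝ :=
  (2 : ℝ) • ((Amat G r x g b)⁻¹ * diagonal r * (Hmat G - 1) * diagonal r)
    + (2 : ℝ) • ((Amat G r x g b)⁻¹ * diagonal x * (Hmat G - 1) * diagonal x)
    + (Amat G r x g b)⁻¹ * diagonal (fun l => (r l) ^ 2 + (x l) ^ 2)


lemma aux_ring {m : Type*} [Fintype m] [DecidableEq m]
    (K dr dx H : Matrix m m ℝ) :
    K * (-((2 : ℝ) • (dr * H * dr)) - (2 : ℝ) • (dx * H * dx) + (dr * dr + dx * dx)) =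
      -((2 : ℝ) • (K * dr * (H - 1) * dr) + (2 : ℝ) • (K * dx * (H - 1) * dx)
        + K * (dr * dr + dx * dx)) := by
  simp only [two_smul]
  noncomm_ring

/-- equation (19) of the paper, `v = v̂ - D f`, relating the lossy and
lossless DistFlow voltage solutions. -/
theorem stmt2 (n : ℕ) (G : Matrix (Fin n) (Fin n) ℝ) (hG : IsUnit (1 - G))
    (r x g b p q f e : Fin n → ℝ) (v₀ : ℝ) (v vhat : Fin n → ℝ)
    (hA : IsUnit (Amat G r x g b))
    (hv : (Amat G r x g b).mulVec v =
      v₀ • e - (2 : ℝ) • (diagonal r * Hmat G).mulVec p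
        - (2 : ℝ) • (diagonal x * Hmat G).mulVec q
        + (-((2 : ℝ) • (diagonal r * Hmat G * diagonal r))
            - (2 : ℝ) • (diagonal x * Hmat G * diagonal x)
            + diagonal (fun l => (r l) ^ 2 + (x l) ^ 2)).mulVec f)
    (hvhat : (Amat G r x g b).mulVec vhat =
      v₀ • e - (2 : ℝ) • (diagonal r * Hmat G).mulVec p
        - (2 : ℝ) • (diagonal x * Hmat G).mulVec q) :
    v = vhat - (Dmat G r x g b).mulVec f := by
  have hdet : IsUnit (Amat G r x g b).det := (isUnit_iff_isUnit_det _).mp hA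
  set A := Amat G r x g b with hAdef
  set B : Matrix (Fin n) (Fin n) ℝ :=
    -((2 : ℝ) • (diagonal r * Hmat G * diagonal r))
      - (2 : ℝ) • (diagonal x * Hmat G * diagonal x)
      + diagonal (fun l => (r l) ^ 2 + (x l) ^ 2) with hBdef
  have hdiag : diagonal (fun l => (r l) ^ 2 + (x l) ^ 2)
      = diagonal r * diagonal r + diagonal x * diagonal x := by
    rw [diagonal_mul_diagonal, diagonal_mul_diagonal, ← diagonal_add]
    simp only [sq]
  have hsub : A.mulVec (v - vhat) = B.mulVec f := by
    rw [mulVec_sub, hv, hvhat]; abel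
  have hkey : A⁻¹ * B = -(Dmat G r x g b) := by
    rw [hBdef, hdiag, Dmat, ← hAdef, hdiag]
    exact aux_ring _ _ _ _
  have h2 : v - vhat = (A⁻¹ * B).mulVec f := by
    have := congrArg (A⁻¹.mulVec) hsub
    rwa [mulVec_mulVec, mulVec_mulVec, nonsing_inv_mul _ hdet, one_mulVec] at this
  rw [hkey] at h2
  have : v - vhat = -((Dmat G r x g b).mulVec f) := by rw [h2, neg_mulVec]
  linear_combination (norm := abel) this
end
end

section
/- Lemma I, item 1: Let n : ℕ, let G : Matrix (Fin n) (Fin n) ℝ with 1 − G invertible and H := (1 − G)⁻¹ having all entries nonnegative, let r, x, g, b, p, q, e : Fin n → ℝ with r and x entrywise nonnegative, and v₀ : ℝ. Set M₁ := 2·diag(r)·H·diag(g), M₂ := 2·diag(x)·H·diag(b), A := 1 − Gᵀ + M₁ + M₂, assume A is invertible with C := A⁻¹, and set D := 2·C·diag(r)·(H − 1)·diag(r) + 2·C·diag(x)·(H − 1)·diag(x) + C·diag(fun l => (r l)^2 + (x l)^2). Assume every entry of D is nonnegative (condition (8.b)) and let f : Fin n → ℝ be entrywise nonnegative. Suppose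 v, v̂ satisfy A.mulVec v = v₀ • e − 2·diag(r)·H.mulVec p − 2·diag(x)·H.mulVec q + (−2·diag(r)·H·diag(r) − 2·diag(x)·H·diag(x) + diag(fun l => (r l)^2 + (x l)^2)).mulVec f and A.mulVec v̂ = v₀ • e − 2·diag(r)·H.mulVec p − 2·diag(x)·H.mulVec q, and suppose P, Q, P̲, Q̲ satisfy (1 − G).mulVec P = p + diag(g).mulVec v + diag(r).mulVec f, (1 − G).mulVec Q = q + diag(b).mulVec v + diag(x).mulVec f, (1 − G).mulVec P̲ = p + diag(g).mulVec v, and (1 − G).mulVec Q̲ = q + diag(b).mulVec v. Then, entrywise, v ≤ v̂, P̲ ≤ P, and Q̲ ≤ Q. -/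
open Matrix

noncomputable section

/-- Lemma I, item 1.  Under nonnegativity of `H`, `r`, `x`, `D`
(condition (8.b)) and `f`, the lossless voltage `v̂` upper-bounds `v`, and the lossless
flows `P̲`, `Q̲` lower-bound `P`, `Q`. -/
theorem stmt3 (n : ℕ) (G : Matrix (Fin n) (Fin n) ℝ) (hG : IsUnit (1 - G))
    (hH : ∀ k l, 0 ≤ Hmat G k l)
    (r x g b p q e : Fin n → ℝ)
    (hr : ∀ l, 0 ≤ r l) (hx : ∀ l, 0 ≤ x l) (v₀ : ℝ)
    (hA : IsUnit (Amat G r x g b))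
    (h8b : ∀ k l, 0 ≤ Dmat G r x g b k l)
    (f : Fin n → ℝ) (hf : ∀ l, 0 ≤ f l)
    (v vhat P Q Pl Ql : Fin n → ℝ)
    (hv : (Amat G r x g b).mulVec v =
      v₀ • e - (2 : ℝ) • (diagonal r * Hmat G).mulVec p
        - (2 : ℝ) • (diagonal x * Hmat G).mulVec q
        + (-((2 : ℝ) • (diagonal r * Hmat G * diagonal r))
            - (2 : ℝ) • (diagonal x * Hmat G * diagonal x)
            + diagonal (fun l => (r l) ^ 2 + (x l) ^ 2)).mulVec f)
    (hvhat : (Amat G r x g b).mulVec vhat =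
      v₀ • e - (2 : ℝ) • (diagonal r * Hmat G).mulVec p
        - (2 : ℝ) • (diagonal x * Hmat G).mulVec q)
    (hP : (1 - G).mulVec P = p + (diagonal g).mulVec v + (diagonal r).mulVec f)
    (hQ : (1 - G).mulVec Q = q + (diagonal b).mulVec v + (diagonal x).mulVec f)
    (hPl : (1 - G).mulVec Pl = p + (diagonal g).mulVec v)
    (hQl : (1 - G).mulVec Ql = q + (diagonal b).mulVec v) :
    (∀ l, v l ≤ vhat l) ∧ (∀ l, Pl l ≤ P l) ∧ (∀ l, Ql l ≤ Q l) := by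

  have solve : ∀ (M : Matrix (Fin n) (Fin n) ℝ), IsUnit M → ∀ (u w : Fin n → ℝ),
      M.mulVec u = w → u = M⁻¹.mulVec w := by
    intro M hM u w h
    have hd := (Matrix.isUnit_iff_isUnit_det M).mp hM
    rw [← h, Matrix.mulVec_mulVec, Matrix.nonsing_inv_mul M hd, Matrix.one_mulVec]
  -- v̂ - v = D f
  have hRR : diagonal r * diagonal r = diagonal (fun l => (r l) ^ 2) := by
    simp [Matrix.diagonal_mul_diagonal, sq]
  have hXX : diagonal x * diagonal x = diagonal (fun l => (x l) ^ 2) := by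
    simp [Matrix.diagonal_mul_diagonal, sq]
  have hmat : ((2 : ℝ) • (diagonal r * (Hmat G - 1) * diagonal r)
        + (2 : ℝ) • (diagonal x * (Hmat G - 1) * diagonal x)
        + diagonal (fun l => (r l) ^ 2 + (x l) ^ 2))
      = -(-((2 : ℝ) • (diagonal r * Hmat G * diagonal r))
            - (2 : ℝ) • (diagonal x * Hmat G * diagonal x)
            + diagonal (fun l => (r l) ^ 2 + (x l) ^ 2)) := by
    have hdsum : (diagonal (fun l => (r l) ^ 2 + (x l) ^ 2) : Matrix (Fin n) (Fin n) ℝ)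
        = diagonal (fun l => (r l) ^ 2) + diagonal (fun l => (x l) ^ 2) := by
      simp [Matrix.diagonal_add]
    simp only [Matrix.mul_sub, Matrix.sub_mul, Matrix.mul_one, Matrix.one_mul]
    rw [hRR, hXX, hdsum]
    module
  have hAvv : (Amat G r x g b).mulVec (vhat - v)
      = ((2 : ℝ) • (diagonal r * (Hmat G - 1) * diagonal r)
        + (2 : ℝ) • (diagonal x * (Hmat G - 1) * diagonal x)
        + diagonal (fun l => (r l) ^ 2 + (x l) ^ 2)).mulVec f := by
    rw [Matrix.mulVec_sub, hv, hvhat, hmat, Matrix.neg_mulVec]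
    abel
  have hident : (Amat G r x g b)⁻¹ * ((2 : ℝ) • (diagonal r * (Hmat G - 1) * diagonal r)
        + (2 : ℝ) • (diagonal x * (Hmat G - 1) * diagonal x)
        + diagonal (fun l => (r l) ^ 2 + (x l) ^ 2)) = Dmat G r x g b := by
    simp only [Dmat, mul_add, Matrix.mul_smul, Matrix.mul_assoc]
  have hDf : vhat - v = (Dmat G r x g b).mulVec f := by
    rw [solve _ hA _ _ hAvv, Matrix.mulVec_mulVec, hident]
  have hGd := (Matrix.isUnit_iff_isUnit_det _).mp hG
  have hrf : (diagonal r).mulVec f = fun i => r i * f i := by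
    funext i; simp [Matrix.mulVec_diagonal]
  have hxf : (diagonal x).mulVec f = fun i => x i * f i := by
    funext i; simp [Matrix.mulVec_diagonal]
  have hPd : P - Pl = (Hmat G).mulVec (fun i => r i * f i) := by
    have h1 : (1 - G).mulVec (P - Pl) = (diagonal r).mulVec f := by
      rw [Matrix.mulVec_sub, hP, hPl]; abel
    rw [solve _ hG _ _ h1, hrf]; rfl
  have hQd : Q - Ql = (Hmat G).mulVec (fun i => x i * f i) := by
    have h1 : (1 - G).mulVec (Q - Ql) = (diagonal x).mulVec f := by
      rw [Matrix.mulVec_sub, hQ, hQl]; abel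
    rw [solve _ hG _ _ h1, hxf]; rfl
  refine ⟨fun l => ?_, fun l => ?_, fun l => ?_⟩
  · have h0 : 0 ≤ (vhat - v) l := by
      rw [hDf]
      simp only [Matrix.mulVec, dotProduct]
      exact Finset.sum_nonneg fun j _ => mul_nonneg (h8b _ _) (hf _)
    simpa using h0
  · have h0 : 0 ≤ (P - Pl) l := by
      rw [hPd]
      simp only [Matrix.mulVec, dotProduct]
      exact Finset.sum_nonneg fun j _ =>
        mul_nonneg (hH _ _) (mul_nonneg (hr _) (hf _))
    simpa using h0
  · have h0 : 0 ≤ (Q - Ql) l := by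
      rw [hQd]
      simp only [Matrix.mulVec, dotProduct]
      exact Finset.sum_nonneg fun j _ =>
        mul_nonneg (hH _ _) (mul_nonneg (hx _) (hf _))
    simpa using h0
end
end

section
/- Let n : ℕ, let G : Matrix (Fin n) (Fin n) ℝ with 1 − G invertible and H := (1 − G)⁻¹, and let p, g, v, r, f, P, P̲ : Fin n → ℝ satisfy (1 − G).mulVec P = p + diag(g).mulVec v + diag(r).mulVec f and (1 − G).mulVec P̲ = p + diag(g).mulVec v. Then P̲ = P − (H·diag(r)).mulVec f and P − diag(r).mulVec f − P̲ = ((H − 1)·diag(r)).mulVec f (equation (21) of the paper). In particular, if all entries of H and of H − 1 are nonnegative and r l * f l ≥ 0 for every l, then P̲ l ≤ P l − r l * f l ≤ P l for every l. -/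
open Matrix

/-- equation (21) of the paper, `P̲ = P - H diag(r) f` and
`P - diag(r) f - P̲ = (H - 1) diag(r) f`; in particular, under nonnegativity
assumptions, `P̲ ≤ P - diag(r) f ≤ P` entrywise. -/
theorem stmt4 (n : ℕ) (G : Matrix (Fin n) (Fin n) ℝ) (hG : IsUnit (1 - G))
    (p g v r f P Pl : Fin n → ℝ)
    (hP : (1 - G).mulVec P = p + (diagonal g).mulVec v + (diagonal r).mulVec f)
    (hPl : (1 - G).mulVec Pl = p + (diagonal g).mulVec v) :
    Pl = P - ((1 - G)⁻¹ * diagonal r).mulVec f ∧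
    P - (diagonal r).mulVec f - Pl = (((1 - G)⁻¹ - 1) * diagonal r).mulVec f ∧
    ((∀ k l, 0 ≤ (1 - G)⁻¹ k l) → (∀ k l, 0 ≤ ((1 - G)⁻¹ - 1) k l) →
      (∀ l, 0 ≤ r l * f l) →
      ∀ l, Pl l ≤ P l - r l * f l ∧ P l - r l * f l ≤ P l) := by
  have hdet : IsUnit (1 - G).det := (Matrix.isUnit_iff_isUnit_det _).mp hG
  have h1 : (1 - G).mulVec (P - Pl) = (diagonal r).mulVec f := by
    rw [mulVec_sub, hP, hPl]
    abel
  have h2 : P - Pl = ((1 - G)⁻¹ * diagonal r).mulVec f := by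
    calc P - Pl = (1 : Matrix (Fin n) (Fin n) ℝ).mulVec (P - Pl) := by
          rw [one_mulVec]
      _ = ((1 - G)⁻¹ * (1 - G)).mulVec (P - Pl) := by
          rw [Matrix.nonsing_inv_mul _ hdet]
      _ = (1 - G)⁻¹.mulVec ((1 - G).mulVec (P - Pl)) := by
          rw [mulVec_mulVec]
      _ = (1 - G)⁻¹.mulVec ((diagonal r).mulVec f) := by rw [h1]
      _ = ((1 - G)⁻¹ * diagonal r).mulVec f := by rw [mulVec_mulVec]
  have hPl_eq : Pl = P - ((1 - G)⁻¹ * diagonal r).mulVec f := by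
    rw [← h2]; abel
  have h3 : P - (diagonal r).mulVec f - Pl = (((1 - G)⁻¹ - 1) * diagonal r).mulVec f := by
    rw [sub_mul, one_mul, sub_mulVec, ← h2]
    abel
  refine ⟨hPl_eq, h3, fun hH hH1 hrf l => ?_⟩
  have hd : ∀ l, ((diagonal r).mulVec f) l = r l * f l := by
    intro l
    simp [mulVec_diagonal]
  have key : 0 ≤ ((((1 - G)⁻¹ - 1) * diagonal r).mulVec f) l := by
    rw [mulVec, dotProduct]
    refine Finset.sum_nonneg fun j _ => ?_
    rw [mul_diagonal, mul_assoc]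
    exact mul_nonneg (hH1 l j) (hrf j)
  constructor
  · have := h3
    have hl : P l - (diagonal r).mulVec f l - Pl l
        = ((((1 - G)⁻¹ - 1) * diagonal r).mulVec f) l := by
      rw [← h3]; simp
    rw [hd] at hl
    linarith
  · linarith [hrf l]
end

section
/- Let n : ℕ, let G : Matrix (Fin n) (Fin n) ℝ with 1 − G invertible and H := (1 − G)⁻¹, let D : Matrix (Fin n) (Fin n) ℝ, and let p, g, r, f, v, v̂, P, P̂ : Fin n → ℝ satisfy (1 − G).mulVec P = p + diag(g).mulVec v + diag(r).mulVec f, (1 − G).mulVec P̂ = p + diag(g).mulVec v̂, and v = v̂ − D.mulVec f. Then P = P̂ + (H·(diag(r) − diag(g)·D)).mulVec f (equation (20) of the paper). -/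
open Matrix

/-- equation (20) of the paper,
`P = P̂ + H (diag(r) - diag(g) D) f`. -/
theorem stmt5 (n : ℕ) (G : Matrix (Fin n) (Fin n) ℝ) (hG : IsUnit (1 - G))
    (D : Matrix (Fin n) (Fin n) ℝ)
    (p g r f v vhat P Phat : Fin n → ℝ)
    (hP : (1 - G).mulVec P = p + (diagonal g).mulVec v + (diagonal r).mulVec f)
    (hPhat : (1 - G).mulVec Phat = p + (diagonal g).mulVec vhat)
    (hv : v = vhat - D.mulVec f) :
    P = Phat + ((1 - G)⁻¹ * (diagonal r - diagonal g * D)).mulVec f := by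
  have key : (1 - G).mulVec (P - Phat) = (diagonal r - diagonal g * D).mulVec f := by
    rw [mulVec_sub, hP, hPhat, hv, sub_mulVec, mulVec_sub, ← mulVec_mulVec]
    abel
  have h2 : P - Phat = ((1 - G)⁻¹ * (diagonal r - diagonal g * D)).mulVec f := by
    rw [← mulVec_mulVec, ← key, mulVec_mulVec, nonsing_inv_mul _ ((isUnit_iff_isUnit_det _).mp hG), one_mulVec]
  exact sub_eq_iff_eq_add'.mp h2
end

section
/- Let n : ℕ, let G : Matrix (Fin n) (Fin n) ℝ with 1 − G invertible and H := (1 − G)⁻¹, let D : Matrix (Fin n) (Fin n) ℝ, and let p, g, r, f, v, v̂, P, P̂ : Fin n → ℝ satisfy (1 − G).mulVec P = p + diag(g).mulVec v + diag(r).mulVec f, (1 − G).mulVec P̂ = p + diag(g).mulVec v̂, and v = v̂ − D.mulVec f. If for some index l the l-th entry of (H·(diag(r) − diag(g)·D)).mulVec f is nonnegative, then P̂ l ≤ P l. -/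
open Matrix

/-- on indices where the `l`-th entry of `H (diag(r) - diag(g) D) f` is
nonnegative (the set `𝒲ᵖ` of condition (11)), the lossless flow `P̂` lower-bounds the
true flow `P`. -/
theorem stmt7 (n : ℕ) (G : Matrix (Fin n) (Fin n) ℝ) (hG : IsUnit (1 - G))
    (D : Matrix (Fin n) (Fin n) ℝ)
    (p g r f v vhat P Phat : Fin n → ℝ)
    (hP : (1 - G).mulVec P = p + (diagonal g).mulVec v + (diagonal r).mulVec f)
    (hPhat : (1 - G).mulVec Phat = p + (diagonal g).mulVec vhat)
    (hv : v = vhat - D.mulVec f)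
    (l : Fin n)
    (hl : 0 ≤ ((1 - G)⁻¹ * (diagonal r - diagonal g * D)).mulVec f l) :
    Phat l ≤ P l := by
  have key : (1 - G).mulVec (P - Phat) = (diagonal r - diagonal g * D).mulVec f := by
    rw [mulVec_sub, hP, hPhat, hv, sub_mulVec, ← mulVec_mulVec, mulVec_sub]
    abel
  have h2 : P - Phat = ((1 - G)⁻¹ * (diagonal r - diagonal g * D)).mulVec f := by
    rw [← mulVec_mulVec, ← key, mulVec_mulVec, Matrix.nonsing_inv_mul _ ((Matrix.isUnit_iff_isUnit_det _).mp hG), one_mulVec]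
  have := hl
  rw [← h2] at this
  simpa [sub_nonneg] using this
end

section
/- For all real numbers v, v', g, b, p, q with 0 < v', v' ≤ v, g ≥ 0, b ≥ 0, p + v * g ≤ 0, and q + v * b ≤ 0, one has ((p + v * g)^2 + (q + v * b)^2) / v ≤ ((p + v' * g)^2 + (q + v' * b)^2) / v'. -/
lemma aux8 (v v' g p : ℝ) (hv' : 0 < v') (hvv : v' ≤ v)
    (hg : g ≥ 0) (hp : p + v * g ≤ 0) :
    (p + v * g) ^ 2 / v ≤ (p + v' * g) ^ 2 / v' := by
  have hv : 0 < v := lt_of_lt_of_le hv' hvv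
  have h0 : p + v' * g ≤ p + v * g := by nlinarith [mul_nonneg (sub_nonneg.2 hvv) hg]
  have h1 : (p + v * g) ^ 2 ≤ (p + v' * g) ^ 2 := by nlinarith
  calc (p + v * g) ^ 2 / v ≤ (p + v * g) ^ 2 / v' :=
        div_le_div_of_nonneg_left (sq_nonneg _) hv' hvv |>.trans_eq rfl
    _ ≤ (p + v' * g) ^ 2 / v' := by gcongr

/-- the key inequality of the leaf-node base case of Lemma I, item 3. -/
theorem stmt8 (v v' g b p q : ℝ) (hv' : 0 < v') (hvv : v' ≤ v)
    (hg : g ≥ 0) (hb : b ≥ 0) (hp : p + v * g ≤ 0) (hq : q + v * b ≤ 0) :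
    ((p + v * g) ^ 2 + (q + v * b) ^ 2) / v ≤
      ((p + v' * g) ^ 2 + (q + v' * b) ^ 2) / v' := by
  have h1 := aux8 v v' g p hv' hvv hg hp
  have h2 := aux8 v v' b q hv' hvv hb hq
  rw [add_div, add_div]
  exact add_le_add h1 h2
end

section
/- Let v₀ > 0, v ≥ 0, α ≥ 0 and q⁰, w be real numbers. Define the approximate droop injection q_approx := q⁰ − α * (v − w) (linear in the squared voltage v) and the exact droop injection q_exact := q⁰ − 2 * α * Real.sqrt v₀ * (Real.sqrt v − (w + v₀) / (2 * Real.sqrt v₀)) (linear in the voltage magnitude √v, with slope 2α√v₀ and reference voltage (w + v₀)/(2√v₀)). Then q_exact − q_approx = α * (Real.sqrt v − Real.sqrt v₀)^2; in particular q_approx ≤ q_exact, with equality when v = v₀. -/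
/-- the mismatch between the exact Q-V droop injection (linear in the
voltage magnitude `√v`) and its squared-voltage approximation is exactly
`α (√v - √v₀)²`; in particular the approximation is a lower bound, with equality at
`v = v₀`. -/
theorem stmt9 (v₀ v α q0 w : ℝ) (hv₀ : 0 < v₀) (hv : 0 ≤ v) (hα : 0 ≤ α) :
    (q0 - 2 * α * Real.sqrt v₀ * (Real.sqrt v - (w + v₀) / (2 * Real.sqrt v₀)))
        - (q0 - α * (v - w)) = α * (Real.sqrt v - Real.sqrt v₀) ^ 2 ∧
    q0 - α * (v - w) ≤
      q0 - 2 * α * Real.sqrt v₀ * (Real.sqrt v - (w + v₀) / (2 * Real.sqrt v₀)) ∧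
    (v = v₀ →
      q0 - α * (v - w) =
        q0 - 2 * α * Real.sqrt v₀ * (Real.sqrt v - (w + v₀) / (2 * Real.sqrt v₀))) := by
  have h0 : Real.sqrt v₀ ≠ 0 := by positivity
  have hsq : Real.sqrt v * Real.sqrt v = v := Real.mul_self_sqrt hv
  have hsq0 : Real.sqrt v₀ * Real.sqrt v₀ = v₀ := Real.mul_self_sqrt hv₀.le
  have key : (q0 - 2 * α * Real.sqrt v₀ * (Real.sqrt v - (w + v₀) / (2 * Real.sqrt v₀)))
        - (q0 - α * (v - w)) = α * (Real.sqrt v - Real.sqrt v₀) ^ 2 := by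
    field_simp
    have h2 : Real.sqrt v ^ 2 = v := Real.sq_sqrt hv
    have h3 : Real.sqrt v₀ ^ 2 = v₀ := Real.sq_sqrt hv₀.le
    have h4 : Real.sqrt v₀ ^ 3 = v₀ * Real.sqrt v₀ := by
      rw [pow_succ, h3]
    ring_nf
    rw [h2, h3]
  refine ⟨key, by nlinarith [sq_nonneg (Real.sqrt v - Real.sqrt v₀)], ?_⟩
  rintro rfl
  nlinarith [key]
end

section
/- Lemma I, item 2: Assume the radial network encoding. Let r, x, g, b : Fin n → ℝ be entrywise nonnegative, p, q : Fin n → ℝ, v₀ > 0, and v : Fin n → ℝ with v l > 0 for all l. Suppose P, Q, f : Fin n → ℝ satisfy, for every l: P l = p l + g l * v l + r l * f l + ∑_{m ∈ children l} P m; Q l = q l + b l * v l + x l * f l + ∑_{m ∈ children l} Q m; and the exact current equation f l * v l = (P l − r l * f l)^2 + (Q l − x l * f l)^2. Suppose further that P̲, Q̲, P̄, Q̄, f̄ : Fin n → ℝ satisfy, for every l: P̲ l = p l + g l * v l + ∑_{m ∈ children l} P̲ m; Q̲ l = q l + b l * v l + ∑_{m ∈ children l} Q̲ m; P̄ l = p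 l + g l * v l + r l * f̄ l + ∑_{m ∈ children l} P̄ m; Q̄ l = q l + b l * v l + x l * f̄ l + ∑_{m ∈ children l} Q̄ m; and max((P̄ l − r l * f̄ l)^2, (P̲ l)^2) + max((Q̄ l − x l * f̄ l)^2, (Q̲ l)^2) ≤ f̄ l * v l. Then for every l: f l ≤ f̄ l, P l ≤ P̄ l, and Q l ≤ Q̄ l. -/
noncomputable section

/-- Sum of a vector over the children of bus `l` in the radial network encoding. -/
def csum {n : ℕ} (up : Fin n → Option (Fin n)) (P : Fin n → ℝ) (l : Fin n) : ℝ :=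
  ∑ m ∈ Finset.univ.filter (fun m => up m = some l), P m

/-- Lemma I, item 2.  If `(P, Q, v, f)` satisfies the exact per-line
DistFlow equations and `(P̲, Q̲, P̄, Q̄, f̄)` satisfies constraints (3.c)–(3.e), then
`f ≤ f̄`, `P ≤ P̄`, `Q ≤ Q̄` entrywise. -/
theorem stmt10 (n : ℕ) (up : Fin n → Option (Fin n))
    (hup : ∀ l k, up l = some k → (k : ℕ) < (l : ℕ))
    (r x g b : Fin n → ℝ)
    (hr : ∀ l, 0 ≤ r l) (hx : ∀ l, 0 ≤ x l) (hg : ∀ l, 0 ≤ g l) (hb : ∀ l, 0 ≤ b l)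
    (p q : Fin n → ℝ) (v₀ : ℝ) (hv₀ : 0 < v₀)
    (v : Fin n → ℝ) (hv : ∀ l, 0 < v l)
    (P Q f : Fin n → ℝ)
    (hP : ∀ l, P l = p l + g l * v l + r l * f l + csum up P l)
    (hQ : ∀ l, Q l = q l + b l * v l + x l * f l + csum up Q l)
    (hf : ∀ l, f l * v l = (P l - r l * f l) ^ 2 + (Q l - x l * f l) ^ 2)
    (Pl Ql Pb Qb fb : Fin n → ℝ)
    (hPl : ∀ l, Pl l = p l + g l * v l + csum up Pl l)
    (hQl : ∀ l, Ql l = q l + b l * v l + csum up Ql l)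
    (hPb : ∀ l, Pb l = p l + g l * v l + r l * fb l + csum up Pb l)
    (hQb : ∀ l, Qb l = q l + b l * v l + x l * fb l + csum up Qb l)
    (hfb : ∀ l, max ((Pb l - r l * fb l) ^ 2) ((Pl l) ^ 2)
        + max ((Qb l - x l * fb l) ^ 2) ((Ql l) ^ 2) ≤ fb l * v l) :
    ∀ l, f l ≤ fb l ∧ P l ≤ Pb l ∧ Q l ≤ Qb l := by
  have hf0 : ∀ l, 0 ≤ f l := by
    intro l
    have h := hf l
    have h1 : 0 * v l ≤ f l * v l := by
      nlinarith [sq_nonneg (P l - r l * f l), sq_nonneg (Q l - x l * f l)]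
    exact le_of_mul_le_mul_right h1 (hv l)
  have hsq : ∀ a t u : ℝ, a ≤ t → t ≤ u → t ^ 2 ≤ max (u ^ 2) (a ^ 2) := by
    intro a t u h1 h2
    rcases le_total 0 t with h | h
    · exact le_max_of_le_left (by nlinarith)
    · exact le_max_of_le_right (by nlinarith)
  have key1 : ∀ k : ℕ, ∀ l : Fin n, n - (l : ℕ) ≤ k →
      Pl l ≤ P l - r l * f l ∧ Ql l ≤ Q l - x l * f l := by
    intro k
    induction k with
    | zero => intro l hl; exact absurd hl (by have := l.isLt; omega)
    | succ k ih =>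
      intro l hl
      have hsP : csum up Pl l ≤ csum up P l := by
        unfold csum
        apply Finset.sum_le_sum
        intro m hm
        have hmem := (Finset.mem_filter.mp hm).2
        have hlt := hup m l hmem
        have h := (ih m (by omega)).1
        have h2 : 0 ≤ r m * f m := mul_nonneg (hr m) (hf0 m)
        linarith
      have hsQ : csum up Ql l ≤ csum up Q l := by
        unfold csum
        apply Finset.sum_le_sum
        intro m hm
        have hmem := (Finset.mem_filter.mp hm).2
        have hlt := hup m l hmem
        have h := (ih m (by omega)).2
        have h2 : 0 ≤ x m * f m := mul_nonneg (hx m) (hf0 m)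
        linarith
      constructor
      · have := hPl l; have := hP l; linarith
      · have := hQl l; have := hQ l; linarith
  have key2 : ∀ k : ℕ, ∀ l : Fin n, n - (l : ℕ) ≤ k →
      f l ≤ fb l ∧ P l ≤ Pb l ∧ Q l ≤ Qb l := by
    intro k
    induction k with
    | zero => intro l hl; exact absurd hl (by have := l.isLt; omega)
    | succ k ih =>
      intro l hl
      have hsP : csum up P l ≤ csum up Pb l := by
        unfold csum
        apply Finset.sum_le_sum
        intro m hm
        have hmem := (Finset.mem_filter.mp hm).2
        have hlt := hup m l hmem
        exact (ih m (by omega)).2.1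
      have hsQ : csum up Q l ≤ csum up Qb l := by
        unfold csum
        apply Finset.sum_le_sum
        intro m hm
        have hmem := (Finset.mem_filter.mp hm).2
        have hlt := hup m l hmem
        exact (ih m (by omega)).2.2
      have hPm : P l - r l * f l ≤ Pb l - r l * fb l := by
        have := hP l; have := hPb l; linarith
      have hQm : Q l - x l * f l ≤ Qb l - x l * fb l := by
        have := hQ l; have := hQb l; linarith
      have hPlo : Pl l ≤ P l - r l * f l := (key1 n l (Nat.sub_le _ _)).1
      have hQlo : Ql l ≤ Q l - x l * f l := (key1 n l (Nat.sub_le _ _)).2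
      have h1 := hsq (Pl l) (P l - r l * f l) (Pb l - r l * fb l) hPlo hPm
      have h2 := hsq (Ql l) (Q l - x l * f l) (Qb l - x l * fb l) hQlo hQm
      have hffb : f l ≤ fb l := by
        have hfl := hf l
        have hfbl := hfb l
        have hmul : f l * v l ≤ fb l * v l := by linarith
        exact le_of_mul_le_mul_right hmul (hv l)
      refine ⟨hffb, ?_, ?_⟩
      · have h3 : r l * f l ≤ r l * fb l := mul_le_mul_of_nonneg_left hffb (hr l)
        have := hP l; have := hPb l; linarith
      · have h3 : x l * f l ≤ x l * fb l := mul_le_mul_of_nonneg_left hffb (hx l)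
        have := hQ l; have := hQb l; linarith
  exact fun l => key2 n l (Nat.sub_le _ _)
end
end

section
/- Let v, p, pava, α, w, M be real numbers with α ≥ 0, M ≥ |v − w|, and M ≥ α * |v − w|. Then the following are equivalent: (i) there exists y ∈ ({0, 1} : Set ℝ) such that w − M * (1 − y) ≤ v, v ≤ w + M * y, −M * (1 − y) ≤ p − (pava − α * (v − w)), p − (pava − α * (v − w)) ≤ M * (1 − y), −M * y ≤ p − pava, and p − pava ≤ M * y; (ii) p = pava − α * max (v − w) 0. -/
/-- correctness of the big-M mixed-integer linear model
(constraints (9.a)–(9.c)) of the piecewise-affine P-V droop characteristic. -/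
theorem stmt16 (v p pava α w M : ℝ) (hα : 0 ≤ α)
    (hM1 : M ≥ |v - w|) (hM2 : M ≥ α * |v - w|) :
    (∃ y ∈ ({0, 1} : Set ℝ),
      w - M * (1 - y) ≤ v ∧ v ≤ w + M * y ∧
      -M * (1 - y) ≤ p - (pava - α * (v - w)) ∧
      p - (pava - α * (v - w)) ≤ M * (1 - y) ∧
      -M * y ≤ p - pava ∧ p - pava ≤ M * y) ↔
    p = pava - α * max (v - w) 0 := by
  have habs1 : v - w ≤ |v - w| := le_abs_self _
  have habs2 : -(v - w) ≤ |v - w| := neg_le_abs _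
  have hM0 : 0 ≤ M := le_trans (abs_nonneg _) hM1
  constructor
  · rintro ⟨y, hy, h1, h2, h3, h4, h5, h6⟩
    rcases hy with rfl | rfl
    · have hvw : v ≤ w := by linarith
      rw [max_eq_right (by linarith)]
      linarith
    · have hvw : w ≤ v := by linarith
      rw [max_eq_left (by linarith)]
      linarith
  · intro hp
    rcases le_total v w with hvw | hvw
    · refine ⟨0, Or.inl rfl, ?_⟩
      rw [max_eq_right (by linarith)] at hp
      have h1 : α * (v - w) ≤ 0 := mul_nonpos_of_nonneg_of_nonpos hα (by linarith)
      have h2 : α * (v - w) ≥ -M := by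
        have := mul_le_mul_of_nonneg_left habs2 hα
        have : α * -(v - w) ≤ M := by nlinarith
        linarith
      refine ⟨by linarith, by linarith, by nlinarith, by nlinarith, by linarith, by linarith⟩
    · refine ⟨1, Or.inr rfl, ?_⟩
      rw [max_eq_left (by linarith)] at hp
      have h2 : α * (v - w) ≤ M := by nlinarith
      have h1 : 0 ≤ α * (v - w) := mul_nonneg hα (by linarith)
      refine ⟨by linarith, by linarith, by nlinarith, by nlinarith, by linarith, by linarith⟩
end
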